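/- Let d ≥ 1, m ≥ 2, and K ∈ ℕ be fixed, and let J be an arbitrary real-valued functional on functions ℝ^d → ℝ. For parameters θ = ((v_k, w_k, b_k)_{k=1}^K, c) with v_k ∈ ℝ, w_k ∈ ℝ^d, b_k ∈ ℝ and c a polynomial of total degree strictly less than m, let f_θ(x) = Σ_{k=1}^K v_k ρ_m(⟨w_k, x⟩ − b_k) + c(x). Suppose θ* is a global minimizer of the weight-decay objective θ ↦ J(f_θ) + (1/2) Σ_{k=1}^K (|v_k|² + ‖w_k‖₂^{2m−2}). Then: (i) |v*_k| = ‖w*_k‖₂^{m−1} for every k, so that the weight-decay regularizer equals the path-norm regularizer Σ_{k=1}^K |v*_k| ‖w*_k‖₂^{m−1} at θ*; and (ii) θ* is also a global minimizer of the path-norm objective θ ↦ J(f_θ) + Σ_{k=1}^K |v_k| ‖w_k‖₂^{m−1}. -/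

import Mathlib

open scoped InnerProductSpace BigOperators

/-- The `m`-th order truncated power function `ρ_m(t) = (max 0 t)^(m-1) / (m-1)!`. -/
noncomputable def truncPow (m : ℕ) (t : ℝ) : ℝ :=
  (max 0 t) ^ (m - 1) / (Nat.factorial (m - 1))

/-- A single-hidden layer network of width `K` with truncated-power activation of order `m`
and polynomial term `c`. -/
noncomputable def network (d m K : ℕ) (v : Fin K → ℝ) (w : Fin K → EuclideanSpace ℝ (Fin d))
    (b : Fin K → ℝ) (c : MvPolynomial (Fin d) ℝ) : EuclideanSpace ℝ (Fin d) → ℝ :=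
  fun x => (∑ k, v k * truncPow m (⟪w k, x⟫_ℝ - b k)) + MvPolynomial.eval x c

lemma truncPow_smul (m : ℕ) (l t : ℝ) (hl : 0 ≤ l) :
    truncPow m (l * t) = l ^ (m - 1) * truncPow m t := by
  unfold truncPow
  have h : max 0 (l * t) = l * max 0 t := by
    rw [mul_max_of_nonneg _ _ hl, mul_zero]
  rw [h, mul_pow, mul_div_assoc]

lemma balance (d m K : ℕ) (hm : 2 ≤ m) (v : Fin K → ℝ)
    (w : Fin K → EuclideanSpace ℝ (Fin d)) (b : Fin K → ℝ)
    (c : MvPolynomial (Fin d) ℝ) (hc : c.totalDegree < m) :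
    ∃ (v' : Fin K → ℝ) (w' : Fin K → EuclideanSpace ℝ (Fin d)) (b' : Fin K → ℝ)
      (c' : MvPolynomial (Fin d) ℝ), c'.totalDegree < m ∧
      network d m K v' w' b' c' = network d m K v w b c ∧
      (1 / 2 : ℝ) * (∑ k, (|v' k| ^ 2 + ‖w' k‖ ^ (2 * m - 2))) = ∑ k, |v k| * ‖w k‖ ^ (m - 1) := by
  classical
  have hm1 : m - 1 ≠ 0 := by omega
  have hm2 : 2 * m - 2 = (m - 1) * 2 := by omega
  set lam : Fin K → ℝ := fun k => (|v k| / ‖w k‖ ^ (m - 1)) ^ ((1 : ℝ) / (2 * ((m : ℝ) - 1)))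
    with hlam_def
  refine ⟨fun k => if w k = 0 ∨ v k = 0 then 0 else v k / (lam k) ^ (m - 1),
    fun k => if w k = 0 ∨ v k = 0 then 0 else lam k • w k,
    fun k => if w k = 0 ∨ v k = 0 then 0 else lam k * b k,
    c + MvPolynomial.C (∑ k, if w k = 0 then v k * truncPow m (-(b k)) else 0), ?_, ?_, ?_⟩
  · calc (c + MvPolynomial.C (∑ k, if w k = 0 then v k * truncPow m (-(b k)) else 0)).totalDegree
        ≤ max c.totalDegree (MvPolynomial.C (∑ k, if w k = 0 then v k * truncPow m (-(b k)) else 0) : MvPolynomial (Fin d) ℝ).totalDegree := MvPolynomial.totalDegree_add _ _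
      _ < m := by
          rw [MvPolynomial.totalDegree_C]
          exact max_lt hc (by omega)
  · funext x
    unfold network
    rw [map_add, MvPolynomial.eval_C]
    have key : ∀ k : Fin K,
        ((if w k = 0 ∨ v k = 0 then 0 else v k / (lam k) ^ (m - 1)) *
          truncPow m (⟪(if w k = 0 ∨ v k = 0 then (0 : EuclideanSpace ℝ (Fin d)) else lam k • w k), x⟫_ℝ -
            (if w k = 0 ∨ v k = 0 then 0 else lam k * b k))
          + (if w k = 0 then v k * truncPow m (-(b k)) else 0))
        = v k * truncPow m (⟪w k, x⟫_ℝ - b k) := by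
      intro k
      by_cases hw : w k = 0
      · simp [hw, zero_sub]
      · by_cases hv : v k = 0
        · simp [hw, hv]
        · have hcond : ¬ (w k = 0 ∨ v k = 0) := by tauto
          simp only [if_neg hcond, if_neg hw, add_zero]
          have hwn : (0:ℝ) < ‖w k‖ ^ (m - 1) :=
            pow_pos (norm_pos_iff.mpr hw) _
          have hbase : (0:ℝ) < |v k| / ‖w k‖ ^ (m - 1) :=
            div_pos (abs_pos.mpr hv) hwn
          have hlam : 0 < lam k := Real.rpow_pos_of_pos hbase _
          rw [real_inner_smul_left]
          have heq : lam k * ⟪w k, x⟫_ℝ - lam k * b k = lam k * (⟪w k, x⟫_ℝ - b k) := by ring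
          rw [heq, truncPow_smul m _ _ hlam.le]
          have hlp : (lam k) ^ (m - 1) ≠ 0 := pow_ne_zero _ hlam.ne'
          field_simp
    calc (∑ k, (if w k = 0 ∨ v k = 0 then 0 else v k / (lam k) ^ (m - 1)) *
          truncPow m (⟪(if w k = 0 ∨ v k = 0 then (0 : EuclideanSpace ℝ (Fin d)) else lam k • w k), x⟫_ℝ -
            (if w k = 0 ∨ v k = 0 then 0 else lam k * b k)))
        + (MvPolynomial.eval x c + ∑ k, (if w k = 0 then v k * truncPow m (-(b k)) else 0))
        = (∑ k, ((if w k = 0 ∨ v k = 0 then 0 else v k / (lam k) ^ (m - 1)) *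
          truncPow m (⟪(if w k = 0 ∨ v k = 0 then (0 : EuclideanSpace ℝ (Fin d)) else lam k • w k), x⟫_ℝ -
            (if w k = 0 ∨ v k = 0 then 0 else lam k * b k))
          + (if w k = 0 then v k * truncPow m (-(b k)) else 0))) + MvPolynomial.eval x c := by
          rw [Finset.sum_add_distrib]; ring
      _ = (∑ k, v k * truncPow m (⟪w k, x⟫_ℝ - b k)) + MvPolynomial.eval x c := by
          rw [Finset.sum_congr rfl (fun k _ => key k)]
  · rw [Finset.mul_sum]
    refine Finset.sum_congr rfl (fun k _ => ?_)
    dsimp only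
    by_cases hcond : w k = 0 ∨ v k = 0
    · rw [if_pos hcond, if_pos hcond]
      rcases hcond with hw | hv
      · simp [hw, zero_pow hm1, zero_pow (show 2*m-2 ≠ 0 by omega)]
      · simp [hv, zero_pow (show 2*m-2 ≠ 0 by omega)]
    · push_neg at hcond
      obtain ⟨hw, hv⟩ := hcond
      rw [if_neg (by tauto), if_neg (by tauto)]
      have hwn : (0:ℝ) < ‖w k‖ ^ (m - 1) := pow_pos (norm_pos_iff.mpr hw) _
      have hbase : (0:ℝ) < |v k| / ‖w k‖ ^ (m - 1) := div_pos (abs_pos.mpr hv) hwn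
      have hlam : 0 < lam k := Real.rpow_pos_of_pos hbase _
      have hmu2 : ((lam k) ^ (m - 1)) ^ 2 = |v k| / ‖w k‖ ^ (m - 1) := by
        rw [← pow_mul]
        show ((|v k| / ‖w k‖ ^ (m - 1)) ^ ((1 : ℝ) / (2 * ((m:ℝ) - 1)))) ^ ((m-1) * 2) = _
        rw [← Real.rpow_natCast (((|v k| / ‖w k‖ ^ (m - 1)) ^ ((1 : ℝ) / (2 * ((m:ℝ) - 1))))) ((m-1)*2),
          ← Real.rpow_mul hbase.le]
        have hexp : (1 : ℝ) / (2 * ((m:ℝ) - 1)) * (((m-1) * 2 : ℕ) : ℝ) = 1 := by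
          have hm1' : ((m : ℝ) - 1) ≠ 0 := by
            have h2 : (2:ℝ) ≤ m := by exact_mod_cast hm
            intro h; nlinarith
          push_cast [Nat.cast_sub (by omega : 1 ≤ m)]
          field_simp
        rw [hexp, Real.rpow_one]
      have hmu : (lam k) ^ (m-1) ≠ 0 := pow_ne_zero _ hlam.ne'
      have habs : |v k / (lam k) ^ (m-1)| ^ 2 = |v k| * ‖w k‖ ^ (m - 1) := by
        rw [abs_div, div_pow, sq_abs, abs_of_pos (pow_pos hlam _), hmu2]
        have hvv : v k ^ 2 = |v k| * |v k| := by rw [← sq_abs]; ring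
        rw [hvv]
        field_simp
      have hnrm : ‖lam k • w k‖ ^ (2 * m - 2) = |v k| * ‖w k‖ ^ (m - 1) := by
        rw [norm_smul, Real.norm_eq_abs, abs_of_pos hlam, hm2, mul_pow, pow_mul, pow_mul, hmu2]
        field_simp
      rw [habs, hnrm]; ring
theorem weight_decay_minimizers_are_path_norm_minimizers (d m K : ℕ)
    (hd : 1 ≤ d) (hm : 2 ≤ m)
    (J : (EuclideanSpace ℝ (Fin d) → ℝ) → ℝ)
    (vs : Fin K → ℝ) (ws : Fin K → EuclideanSpace ℝ (Fin d)) (bs : Fin K → ℝ)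
    (cs : MvPolynomial (Fin d) ℝ) (hcs : cs.totalDegree < m)
    (hmin : ∀ (v : Fin K → ℝ) (w : Fin K → EuclideanSpace ℝ (Fin d)) (b : Fin K → ℝ)
      (c : MvPolynomial (Fin d) ℝ), c.totalDegree < m →
      J (network d m K vs ws bs cs) + (1 / 2 : ℝ) * (∑ k, (|vs k| ^ 2 + ‖ws k‖ ^ (2 * m - 2)))
        ≤ J (network d m K v w b c) + (1 / 2 : ℝ) * (∑ k, (|v k| ^ 2 + ‖w k‖ ^ (2 * m - 2)))) :
    (∀ k, |vs k| = ‖ws k‖ ^ (m - 1)) ∧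
    (∀ (v : Fin K → ℝ) (w : Fin K → EuclideanSpace ℝ (Fin d)) (b : Fin K → ℝ)
      (c : MvPolynomial (Fin d) ℝ), c.totalDegree < m →
      J (network d m K vs ws bs cs) + (∑ k, |vs k| * ‖ws k‖ ^ (m - 1))
        ≤ J (network d m K v w b c) + (∑ k, |v k| * ‖w k‖ ^ (m - 1))) := by
  have hm2 : 2 * m - 2 = (m - 1) * 2 := by omega
  -- part (i)
  have part1 : ∀ k, |vs k| = ‖ws k‖ ^ (m - 1) := by
    obtain ⟨v', w', b', c', hc', hfeq, hreg⟩ := balance d m K hm vs ws bs cs hcs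
    have h1 := hmin v' w' b' c' hc'
    rw [hfeq, hreg] at h1
    have h2 : (1 / 2 : ℝ) * (∑ k, (|vs k| ^ 2 + ‖ws k‖ ^ (2 * m - 2)))
        ≤ ∑ k, |vs k| * ‖ws k‖ ^ (m - 1) := by linarith
    have hle : ∀ k : Fin K, |vs k| * ‖ws k‖ ^ (m - 1)
        ≤ (1 / 2 : ℝ) * (|vs k| ^ 2 + ‖ws k‖ ^ (2 * m - 2)) := by
      intro k
      rw [hm2, pow_mul]
      nlinarith [sq_nonneg (|vs k| - ‖ws k‖ ^ (m - 1))]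
    have hsle : ∑ k, |vs k| * ‖ws k‖ ^ (m - 1)
        ≤ ∑ k, (1 / 2 : ℝ) * (|vs k| ^ 2 + ‖ws k‖ ^ (2 * m - 2)) :=
      Finset.sum_le_sum (fun k _ => hle k)
    rw [← Finset.mul_sum] at hsle
    have heq : ∑ k, |vs k| * ‖ws k‖ ^ (m - 1)
        = ∑ k, (1 / 2 : ℝ) * (|vs k| ^ 2 + ‖ws k‖ ^ (2 * m - 2)) := by
      rw [← Finset.mul_sum]; linarith
    have htw := (Finset.sum_eq_sum_iff_of_le (fun k _ => hle k)).mp heq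
    intro k
    have hk := htw k (Finset.mem_univ k)
    rw [hm2, pow_mul] at hk
    have hz : (|vs k| - ‖ws k‖ ^ (m - 1)) ^ 2 = 0 := by nlinarith
    have := pow_eq_zero_iff (n := 2) (by norm_num) |>.mp hz
    linarith
  refine ⟨part1, ?_⟩
  intro v w b c hc
  obtain ⟨v', w', b', c', hc', hfeq, hreg⟩ := balance d m K hm v w b c hc
  have h := hmin v' w' b' c' hc'
  rw [hfeq, hreg] at h
  have hstar : (1 / 2 : ℝ) * (∑ k, (|vs k| ^ 2 + ‖ws k‖ ^ (2 * m - 2)))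
      = ∑ k, |vs k| * ‖ws k‖ ^ (m - 1) := by
    rw [Finset.mul_sum]
    refine Finset.sum_congr rfl (fun k _ => ?_)
    rw [hm2, pow_mul, part1 k]
    ring
  linarith
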